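/- Let W be the real vector space of 2×2 complex Hermitian matrices, on which g ∈ SL₂(ℂ) acts by g·A = (g⁻¹)ᴴ·A·(g⁻¹). Let P : W → W be the linear map sending [[a, b],[conj(b), d]] to [[a, Re b],[Re b, d]] (replacing the off-diagonal entries by their real parts), and let ‖·‖ denote the Frobenius norm. Then for every A ∈ W whose (1,1)-entry is 0, every k ∈ SU(2), and every t ≥ 0: ‖P((k·a(t))·A)‖ ≤ 4·e^t·‖P(k·A)‖, where a(t) = diag(e^{t/2}, e^{−t/2}). -/

import Mathlib

/-- `a(t) = diag(e^{t/2}, e^{−t/2})` as a complex matrix. -/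
noncomputable def aMatC (t : ℝ) : Matrix (Fin 2) (Fin 2) ℂ :=
  !![(Real.exp (t / 2) : ℂ), 0; 0, (Real.exp (-t / 2) : ℂ)]

/-- The action of `g ∈ SL₂(ℂ)` on `2×2` Hermitian matrices: `g·A = (g⁻¹)ᴴ·A·(g⁻¹)`. -/
noncomputable def hermAct (g A : Matrix (Fin 2) (Fin 2) ℂ) : Matrix (Fin 2) (Fin 2) ℂ :=
  (g⁻¹).conjTranspose * A * g⁻¹

/-- The projection replacing the off-diagonal entries by their real parts (the orthogonal
projection onto the complement of `w₀ = [[0, i], [−i, 0]]`). -/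
noncomputable def projOffDiagRe (A : Matrix (Fin 2) (Fin 2) ℂ) : Matrix (Fin 2) (Fin 2) ℂ :=
  !![A 0 0, ((A 0 1).re : ℂ); ((A 1 0).re : ℂ), A 1 1]

/-- The Frobenius norm of a `2×2` complex matrix. -/
noncomputable def frobNorm (M : Matrix (Fin 2) (Fin 2) ℂ) : ℝ :=
  Real.sqrt (∑ i : Fin 2, ∑ j : Fin 2, ‖M i j‖ ^ 2)

/-! ### Auxiliary lemmas -/

open Matrix

noncomputable def vecOf (M : Matrix (Fin 2) (Fin 2) ℂ) : EuclideanSpace ℂ (Fin 2 × Fin 2) :=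
  WithLp.toLp 2 (fun p : Fin 2 × Fin 2 => M p.1 p.2)

lemma frobNorm_eq_norm (M : Matrix (Fin 2) (Fin 2) ℂ) : frobNorm M = ‖vecOf M‖ := by
  rw [EuclideanSpace.norm_eq]
  simp [frobNorm, vecOf, Fintype.sum_prod_type]

lemma frobNorm_add_le (X Y : Matrix (Fin 2) (Fin 2) ℂ) :
    frobNorm (X + Y) ≤ frobNorm X + frobNorm Y := by
  rw [frobNorm_eq_norm, frobNorm_eq_norm, frobNorm_eq_norm,
    show vecOf (X + Y) = vecOf X + vecOf Y from (WithLp.toLp_add 2 _ _)]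
  exact norm_add_le _ _

lemma frobNorm_smul (c : ℂ) (X : Matrix (Fin 2) (Fin 2) ℂ) :
    frobNorm (c • X) = ‖c‖ * frobNorm X := by
  rw [frobNorm_eq_norm, frobNorm_eq_norm, show vecOf (c • X) = c • vecOf X from (by unfold vecOf; rw [← WithLp.toLp_smul]; rfl), norm_smul]

lemma frobNorm_nonneg (M : Matrix (Fin 2) (Fin 2) ℂ) : 0 ≤ frobNorm M := Real.sqrt_nonneg _

lemma abs_diag_sum_le (M : Matrix (Fin 2) (Fin 2) ℂ) :
    ‖M 0 0 + M 1 1‖ ≤ Real.sqrt 2 * frobNorm M := by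
  have h1 : ‖M 0 0 + M 1 1‖ ≤ ‖M 0 0‖ + ‖M 1 1‖ :=
    norm_add_le _ _
  have hS : frobNorm M = Real.sqrt (‖M 0 0‖ ^ 2 + ‖M 0 1‖ ^ 2 +
      (‖M 1 0‖ ^ 2 + ‖M 1 1‖ ^ 2)) := by
    simp [frobNorm, Fin.sum_univ_two]
  set a := ‖M 0 0‖ with ha'
  set b := ‖M 1 1‖ with hb'
  have ha : 0 ≤ a := norm_nonneg _
  have hb : 0 ≤ b := norm_nonneg _
  have h3 : (0:ℝ) ≤ ‖M 0 1‖ ^ 2 := by positivity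
  have h4 : (0:ℝ) ≤ ‖M 1 0‖ ^ 2 := by positivity
  have h2 : a + b ≤ Real.sqrt 2 * frobNorm M := by
    rw [hS, ← Real.sqrt_mul (by norm_num)]
    rw [show a + b = Real.sqrt ((a+b)^2) from (Real.sqrt_sq (by positivity)).symm]
    apply Real.sqrt_le_sqrt
    nlinarith [sq_nonneg (a - b)]
  linarith

lemma aMatC_mul_aMatC_neg (t : ℝ) : aMatC t * aMatC (-t) = 1 := by
  simp [aMatC, Matrix.mul_fin_two, Matrix.one_fin_two, ← Complex.exp_add, -Complex.ofReal_exp,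
    ← Complex.ofReal_mul, ← Real.exp_add, neg_div]

lemma aMatC_herm (t : ℝ) : (aMatC t)ᴴ = aMatC t := by
  ext i j; fin_cases i <;> fin_cases j <;>
    simp [aMatC, -Complex.ofReal_exp, Complex.conj_ofReal]

lemma proj_add (X Y : Matrix (Fin 2) (Fin 2) ℂ) :
    projOffDiagRe (X + Y) = projOffDiagRe X + projOffDiagRe Y := by
  ext i j
  fin_cases i <;> fin_cases j <;> simp [projOffDiagRe] <;> push_cast <;> ring

lemma proj_real_smul (r : ℝ) (X : Matrix (Fin 2) (Fin 2) ℂ) :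
    projOffDiagRe ((r : ℂ) • X) = (r : ℂ) • projOffDiagRe X := by
  ext i j
  fin_cases i <;> fin_cases j <;>
    simp [projOffDiagRe, Complex.ofReal_mul, Complex.mul_re, Complex.ofReal_re,
      Complex.ofReal_im] <;> push_cast <;> ring

/-- **Claim 4.33.**  For a Hermitian `A` with vanishing `(1,1)` entry, `k ∈ SU(2)` and
`t ≥ 0`:  `‖P((k·a(t))·A)‖ ≤ 4·eᵗ·‖P(k·A)‖`, where `·` denotes the action
`g·A = (g⁻¹)ᴴ A g⁻¹` and `P` replaces the off-diagonal entries by their real parts. -/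
theorem noncontracting_projection_bound (A : Matrix (Fin 2) (Fin 2) ℂ)
    (hA : A.IsHermitian) (hA11 : A 0 0 = 0)
    (k : Matrix (Fin 2) (Fin 2) ℂ) (hk : k.conjTranspose * k = 1) (hkdet : k.det = 1)
    (t : ℝ) (ht : 0 ≤ t) :
    frobNorm (projOffDiagRe (hermAct (k * aMatC t) A)) ≤
      4 * Real.exp t * frobNorm (projOffDiagRe (hermAct k A)) := by
  have hkinv : k⁻¹ = kᴴ := Matrix.inv_eq_left_inv hk
  have hainv : (aMatC t)⁻¹ = aMatC (-t) := Matrix.inv_eq_right_inv (aMatC_mul_aMatC_neg t)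
  obtain ⟨d, hd⟩ : ∃ d : ℝ, A 1 1 = (d : ℂ) :=
    ⟨(A 1 1).re, (Complex.conj_eq_iff_re.mp (hA.apply 1 1)).symm⟩
  set E := Real.exp t with hE
  have hE1 : 1 ≤ E := Real.one_le_exp ht
  -- inner decomposition
  have hinner : aMatC (-t) * A * aMatC (-t)
      = A + (((E - 1) * d : ℝ) : ℂ) • !![(0:ℂ),0;0,1] := by
    have e1 : Real.exp (-(t/2)) * Real.exp (t/2) = 1 := by
      rw [← Real.exp_add]; ring_nf; exact Real.exp_zero
    have e2 : Real.exp (t/2) * Real.exp (t/2) = Real.exp t := by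
      rw [← Real.exp_add]; ring_nf
    have hA' : A = !![0, A 0 1; A 1 0, (d:ℂ)] := by
      rw [Matrix.eta_fin_two A, hA11, hd]; simp
    rw [hA']
    ext i j
    fin_cases i <;> fin_cases j <;>
      simp [aMatC, Matrix.mul_apply, Fin.sum_univ_two, -Complex.ofReal_exp, neg_div]
    · calc (Real.exp (-(t/2)) : ℂ) * A 0 1 * (Real.exp (t/2) : ℂ)
          = ((Real.exp (-(t/2)) * Real.exp (t/2) : ℝ) : ℂ) * A 0 1 := by push_cast; ring
        _ = A 0 1 := by rw [e1]; simp
    · calc (Real.exp (t/2) : ℂ) * A 1 0 * (Real.exp (-(t/2)) : ℂ)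
          = ((Real.exp (-(t/2)) * Real.exp (t/2) : ℝ) : ℂ) * A 1 0 := by push_cast; ring
        _ = A 1 0 := by rw [e1]; simp
    · calc (Real.exp (t/2) : ℂ) * (d:ℂ) * (Real.exp (t/2) : ℂ)
          = ((Real.exp (t/2) * Real.exp (t/2) : ℝ) : ℂ) * d := by push_cast; ring
        _ = (d:ℂ) + ((Real.exp t : ℂ) - 1) * d := by rw [e2]; push_cast; ring
  -- main decomposition
  set Q : Matrix (Fin 2) (Fin 2) ℂ := k * !![(0:ℂ),0;0,1] * kᴴ with hQ
  have hNs : hermAct (k * aMatC t) A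
      = hermAct k A + (((E - 1) * d : ℝ) : ℂ) • Q := by
    unfold hermAct
    rw [Matrix.mul_inv_rev, hainv, hkinv, Matrix.conjTranspose_mul, aMatC_herm,
      Matrix.conjTranspose_conjTranspose]
    rw [show k * aMatC (-t) * A * (aMatC (-t) * kᴴ)
        = k * (aMatC (-t) * A * aMatC (-t)) * kᴴ by noncomm_ring]
    rw [hinner, Matrix.mul_add, Matrix.add_mul, Matrix.mul_smul, Matrix.smul_mul]
  -- the projections
  set L := frobNorm (projOffDiagRe (hermAct k A)) with hL
  have hLnn : 0 ≤ L := frobNorm_nonneg _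
  -- trace identity: (hermAct k A) 0 0 + (hermAct k A) 1 1 = d
  have hM : hermAct k A = k * A * kᴴ := by
    unfold hermAct
    rw [hkinv, Matrix.conjTranspose_conjTranspose]
  have htr : (hermAct k A) 0 0 + (hermAct k A) 1 1 = (d : ℂ) := by
    have h1 : Matrix.trace (k * A * kᴴ) = Matrix.trace A := by
      rw [Matrix.trace_mul_cycle, hk, one_mul]
    rw [hM, show (k * A * kᴴ) 0 0 + (k * A * kᴴ) 1 1 = Matrix.trace (k * A * kᴴ) from
      (Matrix.trace_fin_two _).symm, h1, Matrix.trace_fin_two, hA11, hd, zero_add]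
  have hdL : |d| ≤ Real.sqrt 2 * L := by
    have h := abs_diag_sum_le (projOffDiagRe (hermAct k A))
    have h00 : (projOffDiagRe (hermAct k A)) 0 0 = (hermAct k A) 0 0 := by simp [projOffDiagRe]
    have h11 : (projOffDiagRe (hermAct k A)) 1 1 = (hermAct k A) 1 1 := by simp [projOffDiagRe]
    rw [h00, h11, htr] at h
    simpa [Complex.norm_real] using h
  -- bound on the projection of Q
  have hQbound : frobNorm (projOffDiagRe Q) ≤ 1 := by
    set x := k 0 1 with hx
    set y := k 1 1 with hy
    have hcol : Complex.normSq x + Complex.normSq y = 1 := by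
      have h := congrFun (congrFun hk 1) 1
      simp [Matrix.mul_apply, Fin.sum_univ_two, Matrix.conjTranspose_apply,
        Matrix.one_apply] at h
      have h2 : ((Complex.normSq x + Complex.normSq y : ℝ) : ℂ) = 1 := by
        push_cast
        rw [Complex.normSq_eq_conj_mul_self, Complex.normSq_eq_conj_mul_self]
        linear_combination h
      exact_mod_cast h2
    have hQent : Q = !![((Complex.normSq x : ℝ) : ℂ), x * (starRingEnd ℂ) y;
        y * (starRingEnd ℂ) x, ((Complex.normSq y : ℝ) : ℂ)] := by
      rw [hQ]
      ext i j
      fin_cases i <;> fin_cases j <;>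
        simp [Matrix.mul_apply, Fin.sum_univ_two, Matrix.conjTranspose_apply, hx, hy,
          Complex.mul_conj]
    have hsqrtS : frobNorm (projOffDiagRe Q) =
        Real.sqrt (Complex.normSq x ^ 2 + (x * (starRingEnd ℂ) y).re ^ 2 +
          ((y * (starRingEnd ℂ) x).re ^ 2 + Complex.normSq y ^ 2)) := by
      rw [frobNorm]
      congr 1
      rw [Fin.sum_univ_two, Fin.sum_univ_two, Fin.sum_univ_two]
      simp only [projOffDiagRe, hQent]
      simp [Complex.norm_real, sq_abs, Complex.normSq_nonneg,
        abs_of_nonneg (Complex.normSq_nonneg x), abs_of_nonneg (Complex.normSq_nonneg y)]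
      simp [← Complex.ofReal_mul, ← Complex.ofReal_add, Complex.norm_real, sq_abs]
    rw [hsqrtS]
    rw [show (1:ℝ) = Real.sqrt 1 from Real.sqrt_one.symm]
    apply Real.sqrt_le_sqrt
    have hb1 : (x * (starRingEnd ℂ) y).re ^ 2 ≤ Complex.normSq x * Complex.normSq y := by
      have hle := Complex.abs_re_le_norm (x * (starRingEnd ℂ) y)
      have h2 : ‖x * (starRingEnd ℂ) y‖ ^ 2
          = Complex.normSq x * Complex.normSq y := by
        rw [Complex.sq_norm, Complex.normSq_mul, Complex.normSq_conj]
      nlinarith [abs_nonneg (x * (starRingEnd ℂ) y).re, sq_abs (x * (starRingEnd ℂ) y).re]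
    have hb2 : (y * (starRingEnd ℂ) x).re ^ 2 ≤ Complex.normSq x * Complex.normSq y := by
      have hle := Complex.abs_re_le_norm (y * (starRingEnd ℂ) x)
      have h2 : ‖y * (starRingEnd ℂ) x‖ ^ 2
          = Complex.normSq x * Complex.normSq y := by
        rw [Complex.sq_norm, Complex.normSq_mul, Complex.normSq_conj]; ring
      nlinarith [abs_nonneg (y * (starRingEnd ℂ) x).re, sq_abs (y * (starRingEnd ℂ) x).re]
    nlinarith [Complex.normSq_nonneg x, Complex.normSq_nonneg y]
  -- put everything together
  have key : frobNorm (projOffDiagRe (hermAct (k * aMatC t) A))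
      ≤ L + (E - 1) * |d| := by
    rw [hNs, proj_add, proj_real_smul]
    refine le_trans (frobNorm_add_le _ _) ?_
    rw [frobNorm_smul]
    have habs : ‖(((E - 1) * d : ℝ) : ℂ)‖ = (E - 1) * |d| := by
      rw [Complex.norm_real, Real.norm_eq_abs, abs_mul, abs_of_nonneg (by linarith : (0:ℝ) ≤ E - 1)]
    rw [habs]
    have hmul := mul_le_mul_of_nonneg_left hQbound (mul_nonneg (by linarith : (0:ℝ) ≤ E - 1) (abs_nonneg d))
    nlinarith [frobNorm_nonneg (projOffDiagRe Q), abs_nonneg d]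
  have hsqrt2 : Real.sqrt 2 ≤ 2 := by
    nlinarith [Real.sq_sqrt (show (0:ℝ) ≤ 2 by norm_num), Real.sqrt_nonneg 2]
  have hs2nn : 0 ≤ Real.sqrt 2 := Real.sqrt_nonneg 2
  calc frobNorm (projOffDiagRe (hermAct (k * aMatC t) A))
      ≤ L + (E - 1) * |d| := key
    _ ≤ L + (E - 1) * (Real.sqrt 2 * L) := by
        exact add_le_add (le_refl _) (mul_le_mul_of_nonneg_left hdL (by linarith))
    _ ≤ 4 * E * L := by
        nlinarith [mul_le_mul_of_nonneg_right hsqrt2 hLnn,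
          mul_nonneg (by linarith : (0:ℝ) ≤ E - 1) hLnn,
          mul_nonneg (mul_nonneg (by linarith : (0:ℝ) ≤ E - 1) hLnn) (by norm_num : (0:ℝ) ≤ 2)]
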